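/- If G = (X,Y;E) is a bipartite graph with maximum degree Δ(G), then χ'_int(G,X) ≤ (Δ(G))²·(Δ(G)+1)/2; that is, G has an X-interval coloring using at most (Δ(G))²(Δ(G)+1)/2 colors. -/
import Mathlib

open Finset

/-- `X` is one part of a bipartition of `G`: every edge joins `X` and its complement. -/
def IsBipartition {V : Type*} (G : SimpleGraph V) (X : Set V) : Prop :=
  ∀ v w, G.Adj v w → (v ∈ X ↔ w ∉ X)

/-- A proper edge coloring: distinct edges sharing a vertex get distinct colors. -/
def IsProperEdgeColoring {V : Type*} (G : SimpleGraph V) (c : G.edgeSet → ℕ) : Prop :=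
  ∀ e f : G.edgeSet, e ≠ f → (∃ v, v ∈ (e : Sym2 V) ∧ v ∈ (f : Sym2 V)) → c e ≠ c f

/-- The palette of a vertex: the set of colors on its incident edges. -/
def palette {V : Type*} (G : SimpleGraph V) (c : G.edgeSet → ℕ) (v : V) : Set ℕ :=
  {n | ∃ e : G.edgeSet, v ∈ (e : Sym2 V) ∧ c e = n}

/-- The coloring is interval at `v`: the palette of `v` is a set of consecutive integers. -/
def IntervalAt {V : Type*} (G : SimpleGraph V) (c : G.edgeSet → ℕ) (v : V) : Prop :=
  ∀ a b m : ℕ, a ∈ palette G c v → b ∈ palette G c v → a ≤ m → m ≤ b →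
    m ∈ palette G c v

section Aux

variable {V : Type*} [Fintype V] [DecidableEq V]

/-- Rank of `y` among the neighbors of `x`, w.r.t. a fixed enumeration of `V`. -/
noncomputable def rk (G : SimpleGraph V) [DecidableRel G.Adj] (x y : V) : ℕ :=
  ((G.neighborFinset x).filter
    (fun z => (Fintype.equivFin V) z < (Fintype.equivFin V) y)).card

variable {G : SimpleGraph V} [DecidableRel G.Adj]

lemma memN {x y : V} : y ∈ G.neighborFinset x ↔ G.Adj x y :=
  SimpleGraph.mem_neighborFinset G x y

lemma rk_lt {x y : V} (h : y ∈ G.neighborFinset x) : rk G x y < G.degree x := by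
  apply Finset.card_lt_card
  rw [Finset.ssubset_iff_of_subset (Finset.filter_subset _ _)]
  exact ⟨y, h, by simp⟩

lemma rk_lt_rk {x y1 y2 : V} (h1 : y1 ∈ G.neighborFinset x)
    (hlt : (Fintype.equivFin V) y1 < (Fintype.equivFin V) y2) :
    rk G x y1 < rk G x y2 := by
  apply Finset.card_lt_card
  rw [Finset.ssubset_iff_of_subset]
  · exact ⟨y1, Finset.mem_filter.2 ⟨h1, hlt⟩, by simp⟩
  · intro z hz
    rw [Finset.mem_filter] at hz ⊢
    exact ⟨hz.1, hz.2.trans hlt⟩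

lemma rk_injOn {x y1 y2 : V} (h1 : y1 ∈ G.neighborFinset x) (h2 : y2 ∈ G.neighborFinset x)
    (he : rk G x y1 = rk G x y2) : y1 = y2 := by
  rcases lt_trichotomy ((Fintype.equivFin V) y1) ((Fintype.equivFin V) y2) with h | h | h
  · exact absurd he (Nat.ne_of_lt (rk_lt_rk h1 h))
  · exact (Fintype.equivFin V).injective (Fin.ext (by exact_mod_cast congrArg Fin.val h))
  · exact absurd he.symm (Nat.ne_of_lt (rk_lt_rk h2 h))

lemma rk_surj {x : V} {t : ℕ} (ht : t < G.degree x) :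
    ∃ y ∈ G.neighborFinset x, rk G x y = t := by
  have hinj : Set.InjOn (rk G x) (G.neighborFinset x) := fun a ha b hb => rk_injOn ha hb
  have hcard : ((G.neighborFinset x).image (rk G x)).card = G.degree x :=
    Finset.card_image_of_injOn hinj
  have hsub : (G.neighborFinset x).image (rk G x) ⊆ Finset.range (G.degree x) := by
    intro n hn
    rw [Finset.mem_image] at hn
    obtain ⟨y, hy, rfl⟩ := hn
    exact Finset.mem_range.2 (rk_lt hy)
  have heq := Finset.eq_of_subset_of_card_le hsub (by rw [hcard, Finset.card_range])
  have ht' : t ∈ (G.neighborFinset x).image (rk G x) := by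
    rw [heq]; exact Finset.mem_range.2 ht
  simpa [Finset.mem_image] using ht'

lemma exists_B (G : SimpleGraph V) [DecidableRel G.Adj] :
    ∃ B : V → ℕ, (∀ x, B x ≤ G.maxDegree * (G.maxDegree - 1)) ∧
      ∀ x x' y : V, x ≠ x' → G.Adj x y → G.Adj x' y →
        B x + rk G x y ≠ B x' + rk G x' y := by
  set D := G.maxDegree * (G.maxDegree - 1) with hD
  suffices h : ∀ s : Finset V, ∃ B : V → ℕ, (∀ x ∈ s, B x ≤ D) ∧
      ∀ x ∈ s, ∀ x' ∈ s, ∀ y : V, x ≠ x' → G.Adj x y → G.Adj x' y →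
        B x + rk G x y ≠ B x' + rk G x' y by
    obtain ⟨B, h1, h2⟩ := h Finset.univ
    exact ⟨B, fun x => h1 x (mem_univ x), fun x x' y => h2 x (mem_univ x) x' (mem_univ x') y⟩
  intro s
  induction s using Finset.induction with
  | empty => exact ⟨fun _ => 0, by simp, by simp⟩
  | @insert a t ha ih =>
    obtain ⟨B, hB1, hB2⟩ := ih
    set F := (G.neighborFinset a).biUnion
      (fun y => ((G.neighborFinset y).erase a).image
        (fun x' => B x' + rk G x' y - rk G a y)) with hF
    have hFcard : F.card ≤ D := by
      calc F.card ≤ ∑ y ∈ G.neighborFinset a, (((G.neighborFinset y).erase a).image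
            (fun x' => B x' + rk G x' y - rk G a y)).card := Finset.card_biUnion_le
        _ ≤ ∑ _y ∈ G.neighborFinset a, (G.maxDegree - 1) := by
            apply Finset.sum_le_sum
            intro y hy
            have hay : a ∈ G.neighborFinset y := by
              rw [SimpleGraph.mem_neighborFinset] at hy ⊢
              exact hy.symm
            calc (((G.neighborFinset y).erase a).image
                  (fun x' => B x' + rk G x' y - rk G a y)).card
                ≤ ((G.neighborFinset y).erase a).card := Finset.card_image_le
              _ = (G.neighborFinset y).card - 1 := Finset.card_erase_of_mem hay
              _ ≤ G.maxDegree - 1 :=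
                  Nat.sub_le_sub_right (G.degree_le_maxDegree y) 1
        _ = G.degree a * (G.maxDegree - 1) := by
            rw [Finset.sum_const, smul_eq_mul]; rfl
        _ ≤ D := Nat.mul_le_mul_right _ (G.degree_le_maxDegree a)
    have hex : ∃ b, b ∈ Finset.range (D + 1) \ F := by
      by_contra hcon
      push_neg at hcon
      have hsub : Finset.range (D + 1) ⊆ F := by
        intro b hb
        by_contra hbF
        exact hcon b (Finset.mem_sdiff.2 ⟨hb, hbF⟩)
      have := Finset.card_le_card hsub
      rw [Finset.card_range] at this
      omega
    obtain ⟨b, hb⟩ := hex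
    rw [Finset.mem_sdiff, Finset.mem_range] at hb
    have hmemF : ∀ x' y : V, x' ≠ a → G.Adj a y → G.Adj x' y →
        B x' + rk G x' y - rk G a y ∈ F := by
      intro x' y hne hay hx'y
      apply Finset.mem_biUnion.2
      refine ⟨y, memN.2 hay, ?_⟩
      apply Finset.mem_image.2
      exact ⟨x', Finset.mem_erase.2 ⟨hne, memN.2 hx'y.symm⟩, rfl⟩
    refine ⟨Function.update B a b, ?_, ?_⟩
    · intro x hx
      rcases Finset.mem_insert.1 hx with rfl | hx2
      · rw [Function.update_self]; omega
      · have hxa : x ≠ a := by rintro rfl; exact ha hx2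
        rw [Function.update_of_ne hxa]
        exact hB1 x hx2
    · intro x hx x' hx' y hne hadj hadj'
      rcases Finset.mem_insert.1 hx with rfl | hx2
      · rcases Finset.mem_insert.1 hx' with rfl | hx2'
        · exact absurd rfl hne
        · have hxa : x' ≠ x := by rintro rfl; exact ha hx2'
          rw [Function.update_self, Function.update_of_ne hxa]
          intro heq
          have : b = B x' + rk G x' y - rk G x y := by omega
          exact hb.2 (this ▸ hmemF x' y (Ne.symm hne) hadj hadj')
      · rcases Finset.mem_insert.1 hx' with rfl | hx2'
        · have hxa : x ≠ x' := by rintro rfl; exact ha hx2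
          rw [Function.update_self, Function.update_of_ne hxa]
          intro heq
          have : b = B x + rk G x y - rk G x' y := by omega
          exact hb.2 (this ▸ hmemF x y hne hadj' hadj)
        · have hxa : x ≠ a := by rintro rfl; exact ha hx2
          have hxa' : x' ≠ a := by rintro rfl; exact ha hx2'
          rw [Function.update_of_ne hxa, Function.update_of_ne hxa']
          exact hB2 x hx2 x' hx2' y hne hadj hadj'

end Aux

/-- If `G = (X, Y; E)` is a bipartite graph with maximum degree `Δ(G)`, then
`χ'_int(G, X) ≤ Δ(G)² * (Δ(G) + 1) / 2`: `G` has an `X`-interval coloring using at most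
`Δ(G)² * (Δ(G) + 1) / 2` colors. -/
theorem X_interval_coloring_cubic_bound {V : Type*} [Fintype V] [DecidableEq V]
    (G : SimpleGraph V) [DecidableRel G.Adj] (X : Set V)
    (hbip : IsBipartition G X) :
    ∃ c : G.edgeSet → ℕ, IsProperEdgeColoring G c ∧
      (∀ e, c e < G.maxDegree ^ 2 * (G.maxDegree + 1) / 2) ∧
      ∀ x ∈ X, IntervalAt G c x := by
  classical
  obtain ⟨B, hB1, hB2⟩ := exists_B G
  have hex : ∀ e : G.edgeSet, ∃ p : V × V,
      (e : Sym2 V) = s(p.1, p.2) ∧ G.Adj p.1 p.2 ∧ p.1 ∈ X ∧ p.2 ∉ X := by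
    rintro ⟨z, hz⟩
    induction z using Sym2.ind with
    | _ u v =>
      rw [SimpleGraph.mem_edgeSet] at hz
      by_cases hu : u ∈ X
      · exact ⟨(u, v), rfl, hz, hu, (hbip u v hz).1 hu⟩
      · have hv : v ∈ X := by
          by_contra hvn
          exact hu ((hbip u v hz).2 hvn)
        exact ⟨(v, u), Sym2.eq_swap.symm, hz.symm, hv, hu⟩
  set px := fun e => Classical.choose (hex e) with hpx
  have hspec : ∀ e : G.edgeSet, (e : Sym2 V) = s((px e).1, (px e).2) ∧
      G.Adj (px e).1 (px e).2 ∧ (px e).1 ∈ X ∧ (px e).2 ∉ X :=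
    fun e => Classical.choose_spec (hex e)
  set c : G.edgeSet → ℕ := fun e => B (px e).1 + rk G (px e).1 (px e).2 with hc
  have huniq : ∀ (e : G.edgeSet) (x y : V), (e : Sym2 V) = s(x, y) → x ∈ X → y ∉ X →
      (px e).1 = x ∧ (px e).2 = y := by
    intro e x y hexy hx hy
    obtain ⟨h1, h2, h3, h4⟩ := hspec e
    have heq : s((px e).1, (px e).2) = s(x, y) := h1.symm.trans hexy
    rw [Sym2.eq_iff] at heq
    rcases heq with ⟨ha, hb⟩ | ⟨ha, hb⟩
    · exact ⟨ha, hb⟩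
    · exact absurd (ha ▸ h3) hy
  refine ⟨c, ?_, ?_, ?_⟩
  · -- properness
    rintro e f hef ⟨v, hve, hvf⟩
    obtain ⟨he1, he2, he3, he4⟩ := hspec e
    obtain ⟨hf1, hf2, hf3, hf4⟩ := hspec f
    rw [he1, Sym2.mem_iff] at hve
    rw [hf1, Sym2.mem_iff] at hvf
    have hval : (e : Sym2 V) ≠ (f : Sym2 V) := fun h => hef (Subtype.ext h)
    rcases hve with rfl | rfl
    · rcases hvf with heq | heq
      · -- same X endpoint
        have hy12 : (px e).2 ≠ (px f).2 := by
          intro h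
          exact hval (by rw [he1, hf1, heq, h])
        have hrk : rk G (px e).1 (px e).2 ≠ rk G (px e).1 (px f).2 := by
          intro h
          exact hy12 (rk_injOn (memN.2 he2)
            (memN.2 (heq ▸ hf2)) h)
        simp only [hc]
        rw [← heq]
        omega
      · exact absurd (heq ▸ he3) hf4
    · rcases hvf with heq | heq
      · exact absurd (heq ▸ hf3) he4
      · -- same Y endpoint
        have hx12 : (px e).1 ≠ (px f).1 := by
          intro h
          exact hval (by rw [he1, hf1, heq, h])
        have hadj2 : G.Adj (px f).1 (px e).2 := by rw [heq]; exact hf2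
        simp only [hc]
        rw [← heq] at hf2 ⊢
        exact hB2 (px e).1 (px f).1 (px e).2 hx12 he2 hadj2
  · -- bound
    intro e
    obtain ⟨he1, he2, he3, he4⟩ := hspec e
    have hd1 : rk G (px e).1 (px e).2 < G.degree (px e).1 :=
      rk_lt (memN.2 he2)
    have hdeg : G.degree (px e).1 ≤ G.maxDegree := G.degree_le_maxDegree _
    have hdpos : 0 < G.degree (px e).1 :=
      Finset.card_pos.2 ⟨(px e).2, memN.2 he2⟩
    have hMpos : 1 ≤ G.maxDegree := le_trans hdpos hdeg
    have hce : c e < G.maxDegree * (G.maxDegree - 1) + G.maxDegree := by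
      have := hB1 (px e).1
      simp only [hc]
      omega
    refine lt_of_lt_of_le hce ?_
    rw [Nat.le_div_iff_mul_le (by norm_num : 0 < 2)]
    obtain ⟨k, hk⟩ : ∃ k, G.maxDegree = k + 1 := ⟨G.maxDegree - 1, by omega⟩
    rw [hk]
    simp only [Nat.add_sub_cancel]
    ring_nf
    nlinarith [sq_nonneg k]
  · -- interval property
    intro x hx a b m ha hb ham hmb
    obtain ⟨e, hxe, hce⟩ := ha
    obtain ⟨f, hxf, hcf⟩ := hb
    obtain ⟨he1, he2, he3, he4⟩ := hspec e
    obtain ⟨hf1, hf2, hf3, hf4⟩ := hspec f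
    have hxe1 : (px e).1 = x := by
      rw [he1, Sym2.mem_iff] at hxe
      rcases hxe with h | h
      · exact h.symm
      · exact absurd (h ▸ hx) he4
    have hxf1 : (px f).1 = x := by
      rw [hf1, Sym2.mem_iff] at hxf
      rcases hxf with h | h
      · exact h.symm
      · exact absurd (h ▸ hx) hf4
    have hae : a = B x + rk G x (px e).2 := by rw [← hce]; simp only [hc, hxe1]
    have hbf : b = B x + rk G x (px f).2 := by rw [← hcf]; simp only [hc, hxf1]
    have hfd : rk G x (px f).2 < G.degree x :=
      rk_lt (memN.2 (hxf1 ▸ hf2))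
    have hBm : B x ≤ m := le_trans (by omega) ham
    have ht : m - B x < G.degree x := by omega
    obtain ⟨y3, hy3, hrk3⟩ := rk_surj ht
    have hadj3 : G.Adj x y3 := memN.1 hy3
    have hy3X : y3 ∉ X := (hbip x y3 hadj3).1 hx
    refine ⟨⟨s(x, y3), G.mem_edgeSet.2 hadj3⟩, ?_, ?_⟩
    · exact Sym2.mem_mk_left x y3
    · have hu := huniq ⟨s(x, y3), G.mem_edgeSet.2 hadj3⟩ x y3 rfl hx hy3X
      simp only [hc, hu.1, hu.2, hrk3]
      omega
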